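/- If R : so(g) → so(g) is symmetric with respect to the trace form ⟨X,Y⟩ = tr(XY) and satisfies [R(X), A] = [X, B] for all X ∈ so(g), where A, B are g-symmetric matrices, then A and B commute. -/

import Mathlib

/-- If `R : so(g) → so(g)` is symmetric w.r.t. the trace form and satisfies
`[R(X), A] = [X, B]` for all `X ∈ so(g)`, with `A, B` `g`-symmetric, then `A` and `B` commute. -/
theorem stmt_0 {V : Type*} [AddCommGroup V] [Module ℝ V] [FiniteDimensional ℝ V]
    (g : LinearMap.BilinForm ℝ V) (hgnd : g.Nondegenerate) (hgsymm : g.IsSymm)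
    (A B : Module.End ℝ V)
    (hA : ∀ u v : V, g (A u) v = g u (A v))
    (hB : ∀ u v : V, g (B u) v = g u (B v))
    (R : Module.End ℝ V → Module.End ℝ V)
    (hRso : ∀ X : Module.End ℝ V, (∀ u v : V, g (X u) v = - g u (X v)) →
        (∀ u v : V, g (R X u) v = - g u (R X v)))
    (hRsymm : ∀ X Y : Module.End ℝ V,
        (∀ u v : V, g (X u) v = - g u (X v)) →
        (∀ u v : V, g (Y u) v = - g u (Y v)) →
        LinearMap.trace ℝ V (R X * Y) = LinearMap.trace ℝ V (X * R Y))
    (hsect : ∀ X : Module.End ℝ V,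
        (∀ u v : V, g (X u) v = - g u (X v)) → ⁅R X, A⁆ = ⁅X, B⁆) :
    A * B = B * A := by
  classical
  set E := g.toDual hgnd with hE
  -- the g-adjoint
  set adj : Module.End ℝ V → Module.End ℝ V := fun Z =>
    (E.symm.toLinearMap ∘ₗ Module.Dual.transpose (R := ℝ) Z) ∘ₗ E.toLinearMap with hadjdef
  have hadj_apply : ∀ (Z : Module.End ℝ V) (u v : V), g (adj Z u) v = g u (Z v) := by
    intro Z u v
    have h1 : adj Z u = E.symm ((Module.Dual.transpose (R := ℝ) Z) (E u)) := rfl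
    rw [h1, LinearMap.BilinForm.apply_toDual_symm_apply]
    rfl
  -- extensionality using nondegeneracy
  have ext_g : ∀ T T' : Module.End ℝ V, (∀ u v : V, g (T u) v = g (T' u) v) → T = T' := by
    intro T T' h
    ext u
    have h0 : ∀ v, g (T u - T' u) v = 0 := by intro v; simp [h u v]
    have h1 := hgnd.1 _ h0
    rwa [sub_eq_zero] at h1
  have hsymm : ∀ x y : V, g x y = g y x := fun x y => hgsymm.eq x y
  have hadj_apply' : ∀ (Z : Module.End ℝ V) (u v : V), g u (adj Z v) = g (Z u) v := by
    intro Z u v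
    rw [hsymm u (adj Z v), hadj_apply, hsymm v (Z u)]
  have trace_adj : ∀ Z : Module.End ℝ V,
      LinearMap.trace ℝ V (adj Z) = LinearMap.trace ℝ V Z := by
    intro Z
    have h1 : adj Z = (E.symm : Module.Dual ℝ V ≃ₗ[ℝ] V).conj
        (Module.Dual.transpose (R := ℝ) Z) := rfl
    rw [h1, LinearMap.trace_conj', LinearMap.trace_transpose']
  set C : Module.End ℝ V := A * B - B * A with hC
  have hCskew : ∀ u v : V, g (C u) v = - g u (C v) := by
    intro u v
    have h1 : g (C u) v = g (A (B u)) v - g (B (A u)) v := by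
      simp [hC, Module.End.mul_apply, LinearMap.sub_apply, map_sub]
    have h2 : g u (C v) = g u (A (B v)) - g u (B (A v)) := by
      simp [hC, Module.End.mul_apply, LinearMap.sub_apply, map_sub]
    rw [h1, h2, hA (B u) v, hB u (A v), hB (A u) v, hA u (B v)]
    ring
  -- trace (C * Y) = 0 for skew Y
  have key1 : ∀ Y : Module.End ℝ V, (∀ u v : V, g (Y u) v = - g u (Y v)) →
      LinearMap.trace ℝ V (C * Y) = 0 := by
    intro Y hY
    have hcomm := hsect Y hY
    simp only [Ring.lie_def] at hcomm
    have h2 : B * Y - Y * B = A * R Y - R Y * A := by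
      have h := congrArg Neg.neg hcomm
      simp only [neg_sub] at h
      exact h.symm
    have t1 : C * Y = A * (B * Y) - B * (A * Y) := by
      rw [hC, sub_mul, mul_assoc, mul_assoc]
    have t2 : LinearMap.trace ℝ V (B * (A * Y)) = LinearMap.trace ℝ V (A * (Y * B)) := by
      rw [LinearMap.trace_mul_comm, mul_assoc]
    have t3 : LinearMap.trace ℝ V (C * Y)
        = LinearMap.trace ℝ V (A * (B * Y - Y * B)) := by
      rw [t1, map_sub, t2, mul_sub, map_sub]
    rw [t3, h2, mul_sub, map_sub]
    have t4 : LinearMap.trace ℝ V (A * (R Y * A)) = LinearMap.trace ℝ V (A * (A * R Y)) := by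
      rw [← mul_assoc, LinearMap.trace_mul_comm]
    rw [t4, sub_self]
  -- trace (C * Z) = 0 for every Z
  have key2 : ∀ Z : Module.End ℝ V, LinearMap.trace ℝ V (C * Z) = 0 := by
    intro Z
    set S : Module.End ℝ V := Z + adj Z with hS
    set K : Module.End ℝ V := Z - adj Z with hK
    have hKskew : ∀ u v : V, g (K u) v = - g u (K v) := by
      intro u v
      have h1 : g (K u) v = g (Z u) v - g (adj Z u) v := by
        simp [hK, LinearMap.sub_apply, map_sub]
      have h2 : g u (K v) = g u (Z v) - g u (adj Z v) := by
        simp [hK, map_sub]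
      rw [h1, h2, hadj_apply, hadj_apply' Z u v]
      ring
    have hCK : LinearMap.trace ℝ V (C * K) = 0 := key1 K hKskew
    have hadjS : adj S = S := by
      apply ext_g
      intro u v
      rw [hadj_apply]
      have h1 : g u (S v) = g u (Z v) + g u (adj Z v) := by simp [hS, map_add]
      have h2 : g (S u) v = g (Z u) v + g (adj Z u) v := by
        simp [hS, LinearMap.add_apply, map_add]
      rw [h1, h2, hadj_apply, hadj_apply' Z u v]
      ring
    have hadjCS : adj (C * S) = -(S * C) := by
      apply ext_g
      intro u v
      rw [hadj_apply]
      have h1 : g ((-(S * C)) u) v = - g (S (C u)) v := by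
        simp [LinearMap.neg_apply, Module.End.mul_apply]
      have h2 : g (S (C u)) v = g (adj S (C u)) v := by rw [hadjS]
      rw [h1, h2, hadj_apply]
      have h3 : g (C u) (S v) = - g u (C (S v)) := hCskew u (S v)
      rw [h3]
      simp [Module.End.mul_apply]
    have hCS : LinearMap.trace ℝ V (C * S) = 0 := by
      have h1 : LinearMap.trace ℝ V (C * S) = - LinearMap.trace ℝ V (C * S) := by
        calc LinearMap.trace ℝ V (C * S)
            = LinearMap.trace ℝ V (adj (C * S)) := (trace_adj _).symm
          _ = LinearMap.trace ℝ V (-(S * C)) := by rw [hadjCS]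
          _ = - LinearMap.trace ℝ V (S * C) := by rw [map_neg]
          _ = - LinearMap.trace ℝ V (C * S) := by rw [LinearMap.trace_mul_comm]
      linarith
    have hsum : C * S + C * K = C * Z + C * Z := by
      rw [hS, hK, mul_add, mul_sub]
      abel
    have h3 := congrArg (LinearMap.trace ℝ V) hsum
    rw [map_add, map_add, hCS, hCK] at h3
    linarith
  -- conclude C = 0
  have hC0 : C = 0 := by
    ext u
    rw [LinearMap.zero_apply, ← Module.forall_dual_apply_eq_zero_iff ℝ (C u)]
    intro f
    have h1 : C * (dualTensorHom ℝ V V (f ⊗ₜ[ℝ] u)) = dualTensorHom ℝ V V (f ⊗ₜ[ℝ] (C u)) := by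
      ext x
      simp [Module.End.mul_apply, dualTensorHom_apply, map_smul]
    have h2 := key2 (dualTensorHom ℝ V V (f ⊗ₜ[ℝ] u))
    rw [h1, LinearMap.trace_eq_contract_apply] at h2
    simpa using h2
  have h : A * B - B * A = 0 := by rw [← hC, hC0]
  exact sub_eq_zero.mp h
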